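/- Let k be a field, A a commutative Hopf algebra over k, and B a commutative A-comodule algebra with coaction ρ : B → B ⊗_k A. Then for every finite subset F of B there exist a finitely generated k-subalgebra B' of B with F ⊆ B' and a Hopf subalgebra A' of A that is finitely generated as a k-algebra, such that ρ(B') ⊆ B' ⊗_k A'. -/

import Mathlib

open TensorProduct

noncomputable section Conv

variable {k : Type} [CommSemiring k]
variable {C : Type} [AddCommMonoid C] [Module k C] [Coalgebra k C]
variable {L : Type} [Semiring L] [Algebra k L]

/-- The convolution product on `Hom(C, L)`. -/
def conv (f g : C →ₗ[k] L) : C →ₗ[k] L :=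
  LinearMap.mul' k L ∘ₗ TensorProduct.map f g ∘ₗ Coalgebra.comul

/-- The convolution unit. -/
def convUnit : C →ₗ[k] L := Algebra.linearMap k L ∘ₗ Coalgebra.counit

lemma conv_apply_repr (f g : C →ₗ[k] L) {c : C} {ι : Type*} (r : Coalgebra.Repr k c ι) :
    conv f g c = ∑ i ∈ r.index, f (r.left i) * g (r.right i) := by
  simp only [conv, LinearMap.comp_apply, ← r.eq, map_sum, TensorProduct.map_tmul,
    LinearMap.mul'_apply]

lemma counit_smul_sum {c : C} {ι : Type*} (r : Coalgebra.Repr k c ι) :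
    ∑ i ∈ r.index, Coalgebra.counit (R := k) (r.left i) • r.right i = c := by
  have h := Coalgebra.sum_counit_tmul_eq r
  have h2 := congrArg (TensorProduct.lid k C) h
  simp only [map_sum, TensorProduct.lid_tmul, one_smul] at h2
  exact h2

lemma smul_counit_sum {c : C} {ι : Type*} (r : Coalgebra.Repr k c ι) :
    ∑ i ∈ r.index, Coalgebra.counit (R := k) (r.right i) • r.left i = c := by
  have h := Coalgebra.sum_tmul_counit_eq r
  have h2 := congrArg (TensorProduct.rid k C) h
  simp only [map_sum, TensorProduct.rid_tmul, one_smul] at h2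
  exact h2

lemma convUnit_apply (c : C) :
    (convUnit : C →ₗ[k] L) c = Coalgebra.counit (R := k) c • 1 := by
  simp [convUnit, Algebra.smul_def, Algebra.linearMap_apply, mul_one]

lemma conv_unit_left (f : C →ₗ[k] L) : conv convUnit f = f := by
  ext c
  let r := Coalgebra.Repr.arbitrary k c
  rw [conv_apply_repr _ _ r]
  have h := Coalgebra.sum_counit_tmul_map_eq f c (repr := r)
  have h2 := congrArg (TensorProduct.lid k L) h
  simp only [map_sum, TensorProduct.lid_tmul, one_smul] at h2
  calc ∑ i ∈ r.index, convUnit (r.left i) * f (r.right i)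
      = ∑ i ∈ r.index, Coalgebra.counit (R := k) (r.left i) • f (r.right i) := by
        refine Finset.sum_congr rfl fun i _ => ?_
        rw [convUnit_apply, smul_mul_assoc, one_mul]
    _ = f c := h2

lemma conv_unit_right (f : C →ₗ[k] L) : conv f convUnit = f := by
  ext c
  let r := Coalgebra.Repr.arbitrary k c
  rw [conv_apply_repr _ _ r]
  have h := Coalgebra.sum_map_tmul_counit_eq f c (repr := r)
  have h2 := congrArg (TensorProduct.rid k L) h
  simp only [map_sum, TensorProduct.rid_tmul, one_smul] at h2
  calc ∑ i ∈ r.index, f (r.left i) * convUnit (r.right i)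
      = ∑ i ∈ r.index, Coalgebra.counit (R := k) (r.right i) • f (r.left i) := by
        refine Finset.sum_congr rfl fun i _ => ?_
        rw [convUnit_apply, mul_smul_comm, mul_one]
    _ = f c := h2

lemma conv_assoc (f g h : C →ₗ[k] L) : conv (conv f g) h = conv f (conv g h) := by
  ext c
  let r := Coalgebra.Repr.arbitrary k c
  let a₁ : (i : r.ι) → Coalgebra.Repr k (r.left i) (C × C) := fun i => Coalgebra.Repr.arbitrary k _
  let a₂ : (i : r.ι) → Coalgebra.Repr k (r.right i) (C × C) := fun i => Coalgebra.Repr.arbitrary k _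
  have key := Coalgebra.sum_map_tmul_tmul_eq f g h c (repr := r) (a₁ := a₁) (a₂ := a₂)
  have key2 := congrArg (LinearMap.mul' k L ∘ₗ LinearMap.lTensor L (LinearMap.mul' k L)) key
  simp only [map_sum, LinearMap.comp_apply, LinearMap.lTensor_tmul,
    LinearMap.mul'_apply] at key2
  rw [conv_apply_repr (conv f g) h r, conv_apply_repr f (conv g h) r]
  calc ∑ i ∈ r.index, conv f g (r.left i) * h (r.right i)
      = ∑ i ∈ r.index, ∑ j ∈ (a₁ i).index,
          f ((a₁ i).left j) * (g ((a₁ i).right j) * h (r.right i)) := by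
        refine Finset.sum_congr rfl fun i _ => ?_
        rw [conv_apply_repr f g (a₁ i), Finset.sum_mul]
        exact Finset.sum_congr rfl fun j _ => mul_assoc _ _ _
    _ = ∑ i ∈ r.index, ∑ j ∈ (a₂ i).index,
          f (r.left i) * (g ((a₂ i).left j) * h ((a₂ i).right j)) := key2.symm
    _ = ∑ i ∈ r.index, f (r.left i) * conv g h (r.right i) := by
        refine Finset.sum_congr rfl fun i _ => ?_
        rw [conv_apply_repr g h (a₂ i), Finset.mul_sum]

lemma conv_eq_of (f g h : C →ₗ[k] L) (h1 : conv f g = convUnit) (h2 : conv g h = convUnit) :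
    f = h := by
  calc f = conv f convUnit := (conv_unit_right f).symm
    _ = conv f (conv g h) := by rw [h2]
    _ = conv (conv f g) h := (conv_assoc f g h).symm
    _ = conv convUnit h := by rw [h1]
    _ = h := conv_unit_left h

end Conv

noncomputable section Antipode

variable {k : Type} [Field k] {A : Type} [CommRing A] [HopfAlgebra k A]

open Coalgebra HopfAlgebra

/-- A representation of `comul (a ⊗ₜ b)` built from representations of `comul a`, `comul b`. -/
def tensorRepr {a b : A} {ι κ : Type*} (ra : Coalgebra.Repr k a ι) (rb : Coalgebra.Repr k b κ) :
    Coalgebra.Repr k (a ⊗ₜ[k] b) (ι × κ) where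
  index := ra.index ×ˢ rb.index
  left := fun p => ra.left p.1 ⊗ₜ[k] rb.left p.2
  right := fun p => ra.right p.1 ⊗ₜ[k] rb.right p.2
  eq := by
    have : Coalgebra.comul (R := k) (a ⊗ₜ[k] b) =
        TensorProduct.tensorTensorTensorComm k A A A A
          (Coalgebra.comul (R := k) a ⊗ₜ[k] Coalgebra.comul (R := k) b) := rfl
    rw [this, ← ra.eq, ← rb.eq, Finset.sum_product]
    simp only [TensorProduct.sum_tmul, TensorProduct.tmul_sum, map_sum,
      TensorProduct.tensorTensorTensorComm_tmul]
    rw [Finset.sum_comm]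

/-- A representation of `comul (a * b)`. -/
def mulRepr {a b : A} {ι κ : Type*} (ra : Coalgebra.Repr k a ι) (rb : Coalgebra.Repr k b κ) :
    Coalgebra.Repr k (a * b) (ι × κ) where
  index := ra.index ×ˢ rb.index
  left := fun p => ra.left p.1 * rb.left p.2
  right := fun p => ra.right p.1 * rb.right p.2
  eq := by
    rw [Finset.sum_product]
    rw [show Coalgebra.comul (R := k) (a * b)
        = Coalgebra.comul (R := k) a * Coalgebra.comul (R := k) b from Bialgebra.comul_mul a b,
      ← ra.eq, ← rb.eq, Finset.sum_mul_sum]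
    simp only [Algebra.TensorProduct.tmul_mul_tmul]

lemma antipode_one' : antipode (R := k) (1 : A) = 1 := by
  have h := HopfAlgebra.mul_antipode_rTensor_comul_apply (R := k) (A := A) (a := 1)
  rw [Bialgebra.comul_one, Algebra.TensorProduct.one_def] at h
  simpa using h

/-- The two antipode axioms as convolution identities. -/
lemma conv_id_antipode : conv (LinearMap.id : A →ₗ[k] A) (antipode (R := k)) = convUnit := by
  ext a
  have h := HopfAlgebra.mul_antipode_lTensor_comul_apply (R := k) (A := A) (a := a)
  rw [convUnit]
  simpa [conv, LinearMap.lTensor, convUnit] using h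

lemma conv_antipode_id : conv (antipode (R := k)) (LinearMap.id : A →ₗ[k] A) = convUnit := by
  ext a
  have h := HopfAlgebra.mul_antipode_rTensor_comul_apply (R := k) (A := A) (a := a)
  simpa [conv, LinearMap.rTensor, convUnit] using h

/-- `ν : a ⊗ b ↦ S b * S a`. -/
def nu : A ⊗[k] A →ₗ[k] A :=
  LinearMap.mul' k A ∘ₗ TensorProduct.map (antipode (R := k)) (antipode (R := k)) ∘ₗ
    (TensorProduct.comm k A A).toLinearMap

lemma nu_tmul (a b : A) : (nu : A ⊗[k] A →ₗ[k] A) (a ⊗ₜ b) =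
    antipode (R := k) b * antipode (R := k) a := rfl

lemma counit_tmul (a b : A) :
    Coalgebra.counit (R := k) (a ⊗ₜ[k] b) =
      Coalgebra.counit (R := k) a * Coalgebra.counit (R := k) b := by
  rw [TensorProduct.counit_tmul, smul_eq_mul, mul_comm]

lemma conv_mul'_nu :
    conv (LinearMap.mul' k A) (nu : A ⊗[k] A →ₗ[k] A) = convUnit := by
  apply TensorProduct.ext'
  intro a b
  let ra := Coalgebra.Repr.arbitrary k a
  let rb := Coalgebra.Repr.arbitrary k b
  rw [conv_apply_repr _ _ (tensorRepr ra rb)]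
  show ∑ p ∈ ra.index ×ˢ rb.index,
      LinearMap.mul' k A (ra.left p.1 ⊗ₜ rb.left p.2) *
        (nu : A ⊗[k] A →ₗ[k] A) (ra.right p.1 ⊗ₜ[k] rb.right p.2) = _
  have : ∀ p ∈ ra.index ×ˢ rb.index,
      LinearMap.mul' k A (ra.left p.1 ⊗ₜ[k] rb.left p.2) * (nu : A ⊗[k] A →ₗ[k] A) (ra.right p.1 ⊗ₜ[k] rb.right p.2)
      = (rb.left p.2 * antipode (R := k) (rb.right p.2)) *
        (ra.left p.1 * antipode (R := k) (ra.right p.1)) := by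
    intro p _
    rw [nu_tmul, LinearMap.mul'_apply]
    ring
  rw [Finset.sum_congr rfl this, Finset.sum_product]
  simp only [← Finset.sum_mul, HopfAlgebra.sum_mul_antipode_eq_smul]
  rw [← Finset.mul_sum, HopfAlgebra.sum_mul_antipode_eq_smul]
  rw [convUnit_apply, _root_.counit_tmul]
  rw [smul_mul_assoc, mul_smul_comm, smul_smul, mul_one, mul_comm]

lemma conv_antipode_mul'_mul' :
    conv (antipode (R := k) ∘ₗ LinearMap.mul' k A) (LinearMap.mul' k A)
      = (convUnit : A ⊗[k] A →ₗ[k] A) := by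
  apply TensorProduct.ext'
  intro a b
  let ra := Coalgebra.Repr.arbitrary k a
  let rb := Coalgebra.Repr.arbitrary k b
  rw [conv_apply_repr _ _ (tensorRepr ra rb)]
  have h := HopfAlgebra.sum_antipode_mul_eq_smul (R := k) (mulRepr ra rb)
  show ∑ p ∈ ra.index ×ˢ rb.index,
      (antipode (R := k) ∘ₗ LinearMap.mul' k A) (ra.left p.1 ⊗ₜ rb.left p.2) *
        LinearMap.mul' k A (ra.right p.1 ⊗ₜ rb.right p.2) = _
  have heq : ∑ p ∈ ra.index ×ˢ rb.index,
      (antipode (R := k) ∘ₗ LinearMap.mul' k A) (ra.left p.1 ⊗ₜ[k] rb.left p.2) *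
        LinearMap.mul' k A (ra.right p.1 ⊗ₜ rb.right p.2)
      = ∑ p ∈ (mulRepr ra rb).index,
          antipode (R := k) ((mulRepr ra rb).left p) * (mulRepr ra rb).right p :=
    Finset.sum_congr rfl fun p _ => rfl
  rw [heq, h, convUnit_apply, _root_.counit_tmul]
  rw [Bialgebra.counit_mul]

/-- The antipode is an anti-homomorphism of algebras. -/
lemma antipode_mul_anti (a b : A) :
    antipode (R := k) (a * b) = antipode (R := k) b * antipode (R := k) a := by
  have := conv_eq_of (antipode (R := k) ∘ₗ LinearMap.mul' k A) (LinearMap.mul' k A)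
    (nu : A ⊗[k] A →ₗ[k] A) conv_antipode_mul'_mul' conv_mul'_nu
  have happ := congrArg (fun f => f (a ⊗ₜ[k] b)) this
  simpa [nu_tmul] using happ

end Antipode

noncomputable section Antipode2

variable {k : Type} [Field k] {A : Type} [CommRing A] [HopfAlgebra k A]

open Coalgebra HopfAlgebra

lemma antipode_mul' (a b : A) :
    antipode (R := k) (a * b) = antipode (R := k) a * antipode (R := k) b := by
  rw [antipode_mul_anti, mul_comm]

lemma conv_antipode_sq :
    conv (antipode (R := k) (A := A)) (antipode (R := k) ∘ₗ antipode (R := k)) = convUnit := by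
  ext a
  let r := Coalgebra.Repr.arbitrary k a
  rw [conv_apply_repr _ _ r]
  have h : ∀ i ∈ r.index,
      antipode (R := k) (r.left i) *
        (antipode (R := k) ∘ₗ antipode (R := k)) (r.right i)
      = antipode (R := k) (r.left i * antipode (R := k) (r.right i)) := by
    intro i _
    rw [LinearMap.comp_apply, antipode_mul_anti, mul_comm]
  rw [Finset.sum_congr rfl h, ← map_sum, HopfAlgebra.sum_mul_antipode_eq_smul r, map_smul,
    antipode_one', convUnit_apply]

lemma antipode_antipode (a : A) : antipode (R := k) (antipode (R := k) a) = a := by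
  have h := conv_eq_of (LinearMap.id : A →ₗ[k] A) (antipode (R := k))
    (antipode (R := k) ∘ₗ antipode (R := k)) conv_id_antipode conv_antipode_sq
  exact (congrArg (fun f => f a) h).symm

/-- `a ↦ ∑ S a₂ ⊗ S a₁`. -/
def wAnti : A →ₗ[k] A ⊗[k] A :=
  (TensorProduct.comm k A A).toLinearMap ∘ₗ
    TensorProduct.map (antipode (R := k)) (antipode (R := k)) ∘ₗ Coalgebra.comul

lemma conv_comul_comul_antipode :
    conv (Coalgebra.comul (R := k) (A := A))
      (Coalgebra.comul ∘ₗ antipode (R := k)) = convUnit := by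
  ext a
  let r := Coalgebra.Repr.arbitrary k a
  rw [conv_apply_repr _ _ r]
  have h : ∀ i ∈ r.index,
      Coalgebra.comul (R := k) (r.left i) *
        (Coalgebra.comul ∘ₗ antipode (R := k)) (r.right i)
      = Coalgebra.comul (R := k) (r.left i * antipode (R := k) (r.right i)) := by
    intro i _
    rw [LinearMap.comp_apply, ← Bialgebra.comul_mul]
  rw [Finset.sum_congr rfl h, ← map_sum, HopfAlgebra.sum_mul_antipode_eq_smul r, map_smul,
    Bialgebra.comul_one, convUnit_apply]

lemma conv_wAnti_comul :
    conv (wAnti (k := k) (A := A)) Coalgebra.comul = convUnit := by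
  ext a
  let r := Coalgebra.Repr.arbitrary k a
  let rl : (i : r.ι) → Coalgebra.Repr k (r.left i) (A × A) := fun i => Coalgebra.Repr.arbitrary k _
  let rr : (i : r.ι) → Coalgebra.Repr k (r.right i) (A × A) := fun i => Coalgebra.Repr.arbitrary k _
  let rc : (i : r.ι) → (m : (rr i).ι) → Coalgebra.Repr k ((rr i).left m) (A × A) :=
    fun i m => Coalgebra.Repr.arbitrary k _
  let rd : (i : r.ι) → (m : (rr i).ι) → Coalgebra.Repr k ((rr i).right m) (A × A) :=
    fun i m => Coalgebra.Repr.arbitrary k _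
  -- the "swap-and-antipode" map on the first two legs
  set q : A ⊗[k] A →ₗ[k] A ⊗[k] A :=
    (TensorProduct.comm k A A).toLinearMap ∘ₗ
      TensorProduct.map (antipode (R := k)) (antipode (R := k)) with hq
  let K₁ : A ⊗[k] (A ⊗[k] A) →ₗ[k] A ⊗[k] A :=
    LinearMap.mul' k (A ⊗[k] A) ∘ₗ TensorProduct.map q Coalgebra.comul ∘ₗ
      (TensorProduct.assoc k A A A).symm.toLinearMap
  have hK₁ : ∀ (x y z : A), K₁ (x ⊗ₜ[k] (y ⊗ₜ[k] z))
      = (antipode (R := k) y ⊗ₜ[k] antipode (R := k) x) * Coalgebra.comul (R := k) z := by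
    intro x y z
    simp [K₁, hq]
  have key1 := congrArg K₁ (Coalgebra.sum_tmul_tmul_eq r rl rr)
  simp only [map_sum, hK₁] at key1
  -- identify the LHS of key1 with the convolution
  have lhs1 : ∑ i ∈ r.index, ∑ j ∈ (rl i).index,
      (antipode (R := k) ((rl i).right j) ⊗ₜ[k] antipode (R := k) ((rl i).left j)) *
        Coalgebra.comul (R := k) (r.right i)
      = conv (wAnti (k := k) (A := A)) Coalgebra.comul a := by
    rw [conv_apply_repr _ _ r]
    refine Finset.sum_congr rfl fun i _ => ?_
    rw [← Finset.sum_mul]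
    congr 1
    have : wAnti (k := k) (r.left i) = q (Coalgebra.comul (R := k) (r.left i)) := rfl
    rw [this, ← (rl i).eq, map_sum]
    rfl
  -- now process the RHS of key1
  have rhs1 : ∀ i ∈ r.index, ∑ m ∈ (rr i).index,
      (antipode (R := k) ((rr i).left m) ⊗ₜ[k] antipode (R := k) (r.left i)) *
        Coalgebra.comul (R := k) ((rr i).right m)
      = 1 ⊗ₜ[k] (antipode (R := k) (r.left i) * r.right i) := by
    intro i _
    let K₂ : A ⊗[k] (A ⊗[k] A) →ₗ[k] A ⊗[k] A :=
      TensorProduct.map (LinearMap.mul' k A ∘ₗ TensorProduct.map (antipode (R := k)) LinearMap.id)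
        (LinearMap.mulLeft k (antipode (R := k) (r.left i))) ∘ₗ
        (TensorProduct.assoc k A A A).symm.toLinearMap
    have hK₂ : ∀ (x y z : A), K₂ (x ⊗ₜ[k] (y ⊗ₜ[k] z))
        = (antipode (R := k) x * y) ⊗ₜ[k] (antipode (R := k) (r.left i) * z) := by
      intro x y z
      simp [K₂]
    have key2 := congrArg K₂ (Coalgebra.sum_tmul_tmul_eq (rr i) (rc i) (rd i))
    simp only [map_sum, hK₂] at key2
    calc ∑ m ∈ (rr i).index,
        (antipode (R := k) ((rr i).left m) ⊗ₜ[k] antipode (R := k) (r.left i)) *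
          Coalgebra.comul (R := k) ((rr i).right m)
        = ∑ m ∈ (rr i).index, ∑ n ∈ (rd i m).index,
            (antipode (R := k) ((rr i).left m) * (rd i m).left n) ⊗ₜ[k]
              (antipode (R := k) (r.left i) * (rd i m).right n) := by
          refine Finset.sum_congr rfl fun m _ => ?_
          rw [← (rd i m).eq, Finset.mul_sum]
          simp only [Algebra.TensorProduct.tmul_mul_tmul]
      _ = ∑ m ∈ (rr i).index, ∑ n ∈ (rc i m).index,
            (antipode (R := k) ((rc i m).left n) * (rc i m).right n) ⊗ₜ[k]
              (antipode (R := k) (r.left i) * (rr i).right m) := key2.symm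
      _ = ∑ m ∈ (rr i).index, Coalgebra.counit (R := k) ((rr i).left m) •
            (1 ⊗ₜ[k] (antipode (R := k) (r.left i) * (rr i).right m)) := by
          refine Finset.sum_congr rfl fun m _ => ?_
          rw [← TensorProduct.sum_tmul, HopfAlgebra.sum_antipode_mul_eq_smul (rc i m),
            ← TensorProduct.smul_tmul']
      _ = 1 ⊗ₜ[k] (antipode (R := k) (r.left i) * r.right i) := by
          have : ∀ m ∈ (rr i).index, Coalgebra.counit (R := k) ((rr i).left m) •
              (1 ⊗ₜ[k] (antipode (R := k) (r.left i) * (rr i).right m) : A ⊗[k] A)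
              = 1 ⊗ₜ[k] (antipode (R := k) (r.left i) *
                  (Coalgebra.counit (R := k) ((rr i).left m) • (rr i).right m)) := by
            intro m _
            rw [mul_smul_comm, TensorProduct.tmul_smul]
          rw [Finset.sum_congr rfl this, ← TensorProduct.tmul_sum, ← Finset.mul_sum,
            counit_smul_sum (rr i)]
  calc conv (wAnti (k := k) (A := A)) Coalgebra.comul a
      = ∑ i ∈ r.index, ∑ m ∈ (rr i).index,
          (antipode (R := k) ((rr i).left m) ⊗ₜ[k] antipode (R := k) (r.left i)) *
            Coalgebra.comul (R := k) ((rr i).right m) := by rw [← lhs1]; exact key1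
    _ = ∑ i ∈ r.index, 1 ⊗ₜ[k] (antipode (R := k) (r.left i) * r.right i) :=
        Finset.sum_congr rfl rhs1
    _ = 1 ⊗ₜ[k] ∑ i ∈ r.index, antipode (R := k) (r.left i) * r.right i := by
        rw [TensorProduct.tmul_sum]
    _ = convUnit a := by
        rw [HopfAlgebra.sum_antipode_mul_eq_smul r, convUnit_apply, TensorProduct.tmul_smul]
        rw [Algebra.TensorProduct.one_def]

/-- The antipode is an anti-coalgebra morphism. -/
lemma comul_antipode (a : A) :
    Coalgebra.comul (R := k) (antipode (R := k) a) =
      (TensorProduct.comm k A A)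
        (TensorProduct.map (antipode (R := k)) (antipode (R := k))
          (Coalgebra.comul (R := k) a)) := by
  have h := conv_eq_of (wAnti (k := k) (A := A)) Coalgebra.comul
    (Coalgebra.comul ∘ₗ antipode (R := k)) conv_wAnti_comul conv_comul_comul_antipode
  exact (congrArg (fun f => f a) h).symm

end Antipode2

noncomputable section Coeff

variable {k : Type} [Field k]
variable {A : Type} [AddCommGroup A] [Module k A]
variable {J : Type} (α : Module.Basis J k A)
variable {M : Type} [AddCommGroup M] [Module k M]
variable {N : Type} [AddCommGroup N] [Module k N]

open TensorProduct

variable (M) in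
/-- Expansion of elements of `M ⊗ A` along a basis of `A`. -/
def coeffR : M ⊗[k] A ≃ₗ[k] (J →₀ M) :=
  letI := Classical.decEq J
  (TensorProduct.congr (LinearEquiv.refl k M) α.repr) ≪≫ₗ TensorProduct.finsuppScalarRight k k M J

lemma coeffR_tmul (m : M) (a : A) (j : J) :
    coeffR α M (m ⊗ₜ[k] a) j = α.repr a j • m := by
  simp [coeffR, TensorProduct.congr_tmul]

lemma coeffR_tmul_basis (m : M) (j : J) :
    coeffR α M (m ⊗ₜ[k] α j) = Finsupp.single j m := by
  classical
  ext j'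
  rw [coeffR_tmul, Module.Basis.repr_self, Finsupp.single_apply, Finsupp.single_apply]
  split <;> simp_all

lemma sum_coeffR (t : M ⊗[k] A) :
    ((coeffR α M t).sum fun j m => m ⊗ₜ[k] α j) = t := by
  apply (coeffR α M).injective
  rw [map_finsuppSum]
  rw [Finsupp.sum_congr (fun j _ => coeffR_tmul_basis α ((coeffR α M t) j) j)]
  exact Finsupp.sum_single _

lemma coeffR_rTensor (f : M →ₗ[k] N) (t : M ⊗[k] A) (j : J) :
    coeffR α N (f.rTensor A t) j = f (coeffR α M t j) := by
  induction t with
  | zero => simp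
  | tmul m a => rw [LinearMap.rTensor_tmul, coeffR_tmul, coeffR_tmul, map_smul]
  | add x y hx hy => simp only [map_add, Finsupp.add_apply, hx, hy]

lemma coeffR_lTensor_mem (g : A →ₗ[k] A) (t : M ⊗[k] A) (j : J) :
    coeffR α M ((g.lTensor M) t) j ∈ Submodule.span k (Set.range (coeffR α M t)) := by
  have ht : (g.lTensor M) t = (coeffR α M t).sum fun j' m => m ⊗ₜ[k] g (α j') := by
    conv_lhs => rw [← sum_coeffR α t]
    rw [map_finsuppSum]
    exact Finsupp.sum_congr fun j' _ => rfl
  rw [ht, map_finsuppSum, Finsupp.sum_apply]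
  refine Submodule.finsuppSum_mem _ _ _ _ fun j' _ => ?_
  rw [coeffR_tmul]
  exact Submodule.smul_mem _ _ (Submodule.subset_span ⟨j', rfl⟩)

lemma range_coeffR_finite (t : M ⊗[k] A) : (Set.range (coeffR α M t)).Finite := by
  classical
  refine Set.Finite.subset (Set.Finite.insert 0
    (Set.Finite.image (coeffR α M t) (coeffR α M t).support.finite_toSet)) ?_
  rintro x ⟨j, rfl⟩
  by_cases h : coeffR α M t j = 0
  · exact Or.inl h
  · exact Or.inr ⟨j, Finsupp.mem_support_iff.mpr h, rfl⟩

lemma coeffR_mem_of_mem_range {W : Submodule k M} {t : M ⊗[k] A}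
    (h : t ∈ LinearMap.range (W.subtype.rTensor A)) (j : J) : coeffR α M t j ∈ W := by
  obtain ⟨s, rfl⟩ := h
  rw [coeffR_rTensor]
  exact (coeffR α W s j).2

lemma mem_range_of_coeffR_mem {W : Submodule k M} {t : M ⊗[k] A}
    (h : ∀ j, coeffR α M t j ∈ W) : t ∈ LinearMap.range (W.subtype.rTensor A) := by
  rw [← sum_coeffR α t]
  refine Submodule.finsuppSum_mem _ _ _ _ fun j _ => ?_
  exact ⟨(⟨coeffR α M t j, h j⟩ : W) ⊗ₜ[k] α j, rfl⟩

variable (M) in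
/-- Expansion of elements of `A ⊗ M` along a basis of `A`. -/
def coeffL : A ⊗[k] M ≃ₗ[k] (J →₀ M) :=
  (TensorProduct.comm k A M) ≪≫ₗ coeffR α M

lemma coeffL_tmul (a : A) (m : M) (j : J) :
    coeffL α M (a ⊗ₜ[k] m) j = α.repr a j • m := by
  simp [coeffL, coeffR_tmul]

lemma sum_coeffL (t : A ⊗[k] M) :
    ((coeffL α M t).sum fun j m => α j ⊗ₜ[k] m) = t := by
  apply (TensorProduct.comm k A M).injective
  rw [map_finsuppSum]
  exact Eq.trans (Finsupp.sum_congr fun j _ => rfl)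
    (sum_coeffR α ((TensorProduct.comm k A M) t))

lemma coeffL_lTensor (f : M →ₗ[k] N) (t : A ⊗[k] M) (j : J) :
    coeffL α N (f.lTensor A t) j = f (coeffL α M t j) := by
  induction t with
  | zero => simp
  | tmul a m => rw [LinearMap.lTensor_tmul, coeffL_tmul, coeffL_tmul, map_smul]
  | add x y hx hy => simp only [map_add, Finsupp.add_apply, hx, hy]

lemma coeffL_mem_of_mem_range {W : Submodule k M} {t : A ⊗[k] M}
    (h : t ∈ LinearMap.range (W.subtype.lTensor A)) (j : J) : coeffL α M t j ∈ W := by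
  obtain ⟨s, rfl⟩ := h
  rw [coeffL_lTensor]
  exact (coeffL α W s j).2

lemma mem_range_of_coeffL_mem {W : Submodule k M} {t : A ⊗[k] M}
    (h : ∀ j, coeffL α M t j ∈ W) : t ∈ LinearMap.range (W.subtype.lTensor A) := by
  rw [← sum_coeffL α t]
  refine Submodule.finsuppSum_mem _ _ _ _ fun j _ => ?_
  exact ⟨α j ⊗ₜ[k] (⟨coeffL α M t j, h j⟩ : W), rfl⟩

/-- Coefficient extraction on the last leg of a triple tensor product. -/
lemma coeffR_assoc_symm (s : M ⊗[k] (A ⊗[k] A)) (j : J) :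
    coeffR α (M ⊗[k] A) ((TensorProduct.assoc k M A A).symm s) j =
      ((Finsupp.lapply j ∘ₗ (coeffR α A).toLinearMap : A ⊗[k] A →ₗ[k] A).lTensor M) s := by
  induction s with
  | zero => simp
  | tmul m u =>
    induction u with
    | zero => simp [TensorProduct.tmul_zero]
    | tmul x y =>
      simp [coeffR_tmul, TensorProduct.tmul_smul, TensorProduct.smul_tmul']
    | add u v hu hv =>
      simp only [TensorProduct.tmul_add, map_add, Finsupp.add_apply, hu, hv]
  | add x y hx hy => simp only [map_add, Finsupp.add_apply, hx, hy]

/-- Coefficient extraction on the first leg of a triple tensor product. -/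
lemma coeffL_assoc (s : (A ⊗[k] M) ⊗[k] N) (j : J) :
    coeffL α (M ⊗[k] N) ((TensorProduct.assoc k A M N) s) j =
      ((Finsupp.lapply j ∘ₗ (coeffL α M).toLinearMap : A ⊗[k] M →ₗ[k] M).rTensor N) s := by
  induction s with
  | zero => simp
  | tmul u n =>
    induction u with
    | zero => simp [TensorProduct.zero_tmul]
    | tmul a m =>
      simp [coeffL_tmul, TensorProduct.tmul_smul, TensorProduct.smul_tmul']
    | add u v hu hv =>
      simp only [TensorProduct.add_tmul, map_add, Finsupp.add_apply, hu, hv]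
  | add x y hx hy => simp only [map_add, Finsupp.add_apply, hx, hy]

end Coeff

noncomputable section Intersection

variable {k : Type} [Field k]
variable {M : Type} [AddCommGroup M] [Module k M]
variable {N : Type} [AddCommGroup N] [Module k N]

open TensorProduct

lemma mem_range_map_of_mem_inf (P : Submodule k M) (Q : Submodule k N) (t : M ⊗[k] N)
    (h1 : t ∈ LinearMap.range (P.subtype.rTensor N))
    (h2 : t ∈ LinearMap.range (Q.subtype.lTensor M)) :
    t ∈ LinearMap.range (TensorProduct.map P.subtype Q.subtype) := by
  obtain ⟨q, hq⟩ := P.exists_isCompl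
  let π : M →ₗ[k] P := P.linearProjOfIsCompl q hq
  obtain ⟨s, rfl⟩ := h2
  refine ⟨(π.rTensor Q) s, ?_⟩
  have comp1 : (TensorProduct.map P.subtype Q.subtype) ∘ₗ (π.rTensor ↥Q)
      = ((P.subtype ∘ₗ π).rTensor N) ∘ₗ (Q.subtype.lTensor M) := by
    apply TensorProduct.ext'
    intro m n
    simp [TensorProduct.map_tmul]
  have e1 := LinearMap.congr_fun comp1 s
  rw [LinearMap.comp_apply, LinearMap.comp_apply] at e1
  rw [e1]
  obtain ⟨s', hs'⟩ := h1
  rw [← hs', ← LinearMap.comp_apply, ← LinearMap.rTensor_comp]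
  have : (P.subtype ∘ₗ π) ∘ₗ P.subtype = P.subtype := by
    ext p
    simp [π, Submodule.linearProjOfIsCompl_apply_left hq]
    exact Submodule.projectionOnto_apply_left hq p
  rw [this]

lemma range_map_subtype_mono {P P' : Submodule k M} {Q Q' : Submodule k N}
    (hP : P ≤ P') (hQ : Q ≤ Q') :
    LinearMap.range (TensorProduct.map P.subtype Q.subtype) ≤
      LinearMap.range (TensorProduct.map P'.subtype Q'.subtype) := by
  rintro t ⟨s, rfl⟩
  have : TensorProduct.map P.subtype Q.subtype =
      (TensorProduct.map P'.subtype Q'.subtype) ∘ₗ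
        (TensorProduct.map (Submodule.inclusion hP) (Submodule.inclusion hQ)) := by
    rw [← TensorProduct.map_comp]
    congr 1
  rw [this]
  exact ⟨_, rfl⟩

end Intersection

noncomputable section Assembly

open TensorProduct

variable {k : Type} [Field k]

/-- The antipode as an algebra homomorphism (commutative case). -/
def antipodeAlgHom (k A : Type) [Field k] [CommRing A] [HopfAlgebra k A] : A →ₐ[k] A :=
  AlgHom.ofLinearMap (HopfAlgebra.antipode (R := k)) antipode_one' antipode_mul'

@[simp] lemma antipodeAlgHom_apply {A : Type} [CommRing A] [HopfAlgebra k A] (a : A) :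
    antipodeAlgHom k A a = HopfAlgebra.antipode (R := k) a := rfl

variable {B : Type} [CommRing B] [Algebra k B]
variable {A : Type} [CommRing A] [Algebra k A]

lemma algMap_eq_linMap {B' A' : Type} [CommRing B'] [Algebra k B'] [CommRing A'] [Algebra k A']
    (f : B' →ₐ[k] B) (g : A' →ₐ[k] A) (t : B' ⊗[k] A') :
    Algebra.TensorProduct.map f g t = TensorProduct.map f.toLinearMap g.toLinearMap t := by
  induction t with
  | zero => simp
  | tmul x y => rfl
  | add x y hx hy => rw [map_add, map_add, hx, hy]

lemma mem_algRange_iff {B' A' : Type} [CommRing B'] [Algebra k B'] [CommRing A'] [Algebra k A']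
    (f : B' →ₐ[k] B) (g : A' →ₐ[k] A) (t : B ⊗[k] A) :
    t ∈ (Algebra.TensorProduct.map f g).range ↔
      t ∈ LinearMap.range (TensorProduct.map f.toLinearMap g.toLinearMap) := by
  constructor
  · rintro ⟨s, rfl⟩
    exact ⟨s, (algMap_eq_linMap f g s).symm⟩
  · rintro ⟨s, rfl⟩
    exact ⟨s, algMap_eq_linMap f g s⟩

lemma range_map_le_vals (V : Submodule k B) (C : Submodule k A)
    (B' : Subalgebra k B) (A' : Subalgebra k A)
    (hV : (V : Set B) ⊆ ↑B') (hC : (C : Set A) ⊆ ↑A') {t : B ⊗[k] A}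
    (ht : t ∈ LinearMap.range (TensorProduct.map V.subtype C.subtype)) :
    t ∈ (Algebra.TensorProduct.map B'.val A'.val).range := by
  obtain ⟨s, rfl⟩ := ht
  induction s with
  | zero => simp only [map_zero]; exact zero_mem _
  | tmul v c =>
    refine ⟨(⟨(v : B), hV v.2⟩ : B') ⊗ₜ[k] (⟨(c : A), hC c.2⟩ : A'), ?_⟩
    rfl
  | add u v hu hv => rw [map_add]; exact add_mem hu hv

end Assembly

open TensorProduct

/-- Let `A` be a commutative Hopf algebra over a field `k` and let `B` be a commutative
`A`-comodule algebra with coaction `ρ : B → B ⊗[k] A`.  Then every finite subset `F` of `B`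
is contained in a finitely generated `k`-subalgebra `B'` of `B` for which there is a Hopf
subalgebra `A'` of `A`, finitely generated as a `k`-algebra, with `ρ(B') ⊆ B' ⊗[k] A'`. -/
theorem exists_fg_subComoduleAlgebra
    (k : Type) [Field k]
    (A : Type) [CommRing A] [HopfAlgebra k A]
    (B : Type) [CommRing B] [Algebra k B]
    (ρ : B →ₐ[k] B ⊗[k] A)
    (hcoassoc : ∀ b : B,
      (TensorProduct.assoc k B A A)
          ((TensorProduct.map ρ.toLinearMap (LinearMap.id : A →ₗ[k] A)) (ρ b)) =
        (TensorProduct.map (LinearMap.id : B →ₗ[k] B) (Coalgebra.comul (R := k) (A := A)))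
          (ρ b))
    (hcounit : ∀ b : B,
      (TensorProduct.rid k B)
          ((TensorProduct.map (LinearMap.id : B →ₗ[k] B) (Coalgebra.counit (R := k) (A := A)))
            (ρ b)) = b)
    (F : Finset B) :
    ∃ B' : Subalgebra k B, B'.FG ∧ (F : Set B) ⊆ (B' : Set B) ∧
      ∃ A' : Subalgebra k A, A'.FG ∧
        -- `A'` is a Hopf subalgebra: `Δ(A') ⊆ A' ⊗ A'` ...
        (∀ a ∈ A', Coalgebra.comul (R := k) a ∈
          LinearMap.range (TensorProduct.map A'.val.toLinearMap A'.val.toLinearMap)) ∧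
        -- ... and `S(A') ⊆ A'`
        (∀ a ∈ A', HopfAlgebra.antipode (R := k) a ∈ A') ∧
        -- the coaction restricts: `ρ(B') ⊆ B' ⊗ A'`
        (∀ b ∈ B', ρ b ∈
          LinearMap.range (TensorProduct.map B'.val.toLinearMap A'.val.toLinearMap)) := by
  classical
  let α : Module.Basis (Module.Basis.ofVectorSpaceIndex k A) k A := Module.Basis.ofVectorSpace k A
  let β : Module.Basis (Module.Basis.ofVectorSpaceIndex k B) k B := Module.Basis.ofVectorSpace k B
  set J := Module.Basis.ofVectorSpaceIndex k A
  set I := Module.Basis.ofVectorSpaceIndex k B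
  set ρL : B →ₗ[k] B ⊗[k] A := ρ.toLinearMap with hρL
  -- coefficient families
  set w : B → J →₀ B := fun x => coeffR α B (ρ x) with hw
  set w' : B → I →₀ A := fun x => coeffL β A (ρ x) with hw'
  set y : B → I → (J →₀ A) :=
    fun x i => coeffR α A (Coalgebra.comul (R := k) (w' x i)) with hy
  set φ : J → (A ⊗[k] A →ₗ[k] A) :=
    fun j => Finsupp.lapply j ∘ₗ (coeffR α A).toLinearMap with hφ
  set ψ : I → (B ⊗[k] A →ₗ[k] A) :=
    fun i => Finsupp.lapply i ∘ₗ (coeffL β A).toLinearMap with hψ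
  -- coassociativity, restated
  have hco : ∀ x : B, (LinearMap.lTensor B (Coalgebra.comul (R := k) (A := A))) (ρ x)
      = (TensorProduct.assoc k B A A) ((ρL.rTensor A) (ρ x)) := fun x => (hcoassoc x).symm
  -- the structure of `ρ (w x j)`
  have hρw : ∀ (x : B) (j : J),
      ρ (w x j) = (LinearMap.lTensor B ((φ j) ∘ₗ Coalgebra.comul (R := k))) (ρ x) := by
    intro x j
    have h1 : ρ (w x j) = coeffR α (B ⊗[k] A) ((ρL.rTensor A) (ρ x)) j :=
      (coeffR_rTensor α ρL (ρ x) j).symm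
    have h2 : (ρL.rTensor A) (ρ x) = (TensorProduct.assoc k B A A).symm
        ((LinearMap.lTensor B (Coalgebra.comul (R := k) (A := A))) (ρ x)) := by
      rw [hco x]
      exact ((TensorProduct.assoc k B A A).symm_apply_apply _).symm
    rw [h1, h2, coeffR_assoc_symm, ← LinearMap.lTensor_comp_apply]
  -- first-leg coefficients of ρ (w x j) lie in the span of the `w x`'s
  have hK3 : ∀ (x : B) (j j' : J),
      coeffR α B (ρ (w x j)) j' ∈ Submodule.span k (Set.range (w x)) := by
    intro x j j'
    rw [hρw x j]
    exact coeffR_lTensor_mem α _ (ρ x) j'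
  -- left-leg coefficients of `ρ (w x j)` are the `y x i j`
  have hK4b : ∀ (x : B) (i : I) (j : J), coeffL β A (ρ (w x j)) i = y x i j := by
    intro x i j
    rw [hρw x j, coeffL_lTensor]
    rfl
  -- the sets of generators
  set VS : Set B := ↑F ∪ ⋃ b ∈ (F : Set B), Set.range (w b) with hVS
  set CS : Set A := ⋃ b ∈ (F : Set B), ⋃ i : I, Set.range (y b i) with hCS
  set V : Submodule k B := Submodule.span k VS with hV
  set C : Submodule k A := Submodule.span k CS with hC
  have hmemCS : ∀ b ∈ F, ∀ i j, y b i j ∈ CS := by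
    intro b hb i j
    rw [hCS]
    exact Set.mem_biUnion hb (Set.mem_iUnion.2 ⟨i, ⟨j, rfl⟩⟩)
  have hmemC : ∀ b ∈ F, ∀ i j, y b i j ∈ C := fun b hb i j =>
    Submodule.subset_span (hmemCS b hb i j)
  -- finiteness of the generating sets
  have hVSfin : VS.Finite := by
    refine Set.Finite.union F.finite_toSet (Set.Finite.biUnion F.finite_toSet fun b _ => ?_)
    have : Set.range (w b) = Set.range (coeffR α B (ρ b)) := rfl
    rw [this]
    exact range_coeffR_finite α (ρ b)
  have hCSfin : CS.Finite := by
    refine Set.Finite.biUnion F.finite_toSet fun b _ => ?_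
    have hsub : (⋃ i : I, Set.range (y b i)) ⊆
        insert (0 : A) (⋃ i ∈ ((w' b).support : Set I), Set.range (y b i)) := by
      rintro a ha
      obtain ⟨i, ⟨j, rfl⟩⟩ := Set.mem_iUnion.1 ha
      by_cases hi : w' b i = 0
      · left
        rw [hy]
        simp [hi]
      · right
        exact Set.mem_biUnion (Finsupp.mem_support_iff.2 hi) ⟨j, rfl⟩
    refine Set.Finite.subset (Set.Finite.insert _
      (Set.Finite.biUnion (w' b).support.finite_toSet fun i _ => ?_)) hsub
    have : Set.range (y b i) = Set.range (coeffR α A (Coalgebra.comul (R := k) (w' b i))) := rfl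
    rw [this]
    exact range_coeffR_finite α _
  -- the `w' b i` lie in `C` for `b ∈ F`
  have hK4a : ∀ b ∈ F, ∀ i : I, w' b i ∈ C := by
    intro b hb i
    have hrec : Coalgebra.comul (R := k) (w' b i) = (y b i).sum fun l a => a ⊗ₜ[k] α l :=
      (sum_coeffR α _).symm
    set με : A ⊗[k] A →ₗ[k] A :=
      (TensorProduct.rid k A).toLinearMap ∘ₗ
        (LinearMap.lTensor A (Coalgebra.counit (R := k))) with hμε
    have h1 : με (Coalgebra.comul (R := k) (w' b i)) = w' b i := by
      rw [hμε, LinearMap.comp_apply]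
      have : (Coalgebra.counit (R := k)).lTensor A (Coalgebra.comul (R := k) (w' b i))
          = (w' b i) ⊗ₜ[k] (1 : k) := Coalgebra.lTensor_counit_comul _
      rw [this]
      simp
    have h2 : με (Coalgebra.comul (R := k) (w' b i))
        = (y b i).sum fun l a => Coalgebra.counit (R := k) (α l) • a := by
      rw [hrec, map_finsuppSum]
      refine Finsupp.sum_congr fun l _ => ?_
      rw [hμε, LinearMap.comp_apply, LinearMap.lTensor_tmul]
      simp
    rw [← h1, h2]
    exact Submodule.finsuppSum_mem _ _ _ _ fun l hl =>
      Submodule.smul_mem _ _ (hmemC b hb i l)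
  -- comul-stability of the `y`'s : first legs
  have hK5a : ∀ (x : B) (i : I) (j : J), Coalgebra.comul (R := k) (y x i j)
      = (LinearMap.lTensor A ((φ j) ∘ₗ Coalgebra.comul (R := k)))
          (Coalgebra.comul (R := k) (w' x i)) := by
    intro x i j
    have h1 : Coalgebra.comul (R := k) (y x i j)
        = coeffR α (A ⊗[k] A)
            (((Coalgebra.comul (R := k) (A := A)).rTensor A)
              (Coalgebra.comul (R := k) (w' x i))) j :=
      (coeffR_rTensor α _ _ j).symm
    rw [h1, ← Coalgebra.coassoc_symm_apply, coeffR_assoc_symm, ← LinearMap.lTensor_comp_apply]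
  have hfirst : ∀ b ∈ F, ∀ i j, Coalgebra.comul (R := k) (y b i j) ∈
      LinearMap.range (C.subtype.rTensor A) := by
    intro b hb i j
    rw [hK5a b i j]
    have hrec : Coalgebra.comul (R := k) (w' b i) = (y b i).sum fun l a => a ⊗ₜ[k] α l :=
      (sum_coeffR α _).symm
    rw [hrec, map_finsuppSum]
    refine Submodule.finsuppSum_mem _ _ _ _ fun l hl => ?_
    rw [LinearMap.lTensor_tmul]
    exact ⟨(⟨y b i l, hmemC b hb i l⟩ : C) ⊗ₜ[k] _, rfl⟩
  -- comul-stability of the `y`'s : second legs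
  have hK5b : ∀ (x : B) (i : I) (j : J), Coalgebra.comul (R := k) (y x i j)
      = (((ψ i) ∘ₗ ρL).rTensor A) (ρ (w x j)) := by
    intro x i j
    rw [← hK4b x i j]
    have h1 : Coalgebra.comul (R := k) (coeffL β A (ρ (w x j)) i)
        = coeffL β (A ⊗[k] A)
            ((LinearMap.lTensor B (Coalgebra.comul (R := k) (A := A))) (ρ (w x j))) i :=
      (coeffL_lTensor β _ _ i).symm
    rw [h1, hco (w x j), coeffL_assoc, ← LinearMap.rTensor_comp_apply]
  have hsecond : ∀ b ∈ F, ∀ i j, Coalgebra.comul (R := k) (y b i j) ∈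
      LinearMap.range (C.subtype.lTensor A) := by
    intro b hb i j
    rw [hK5b b i j]
    have hrec : ρ (w b j) = (coeffL β A (ρ (w b j))).sum fun i' a => β i' ⊗ₜ[k] a :=
      (sum_coeffL β _).symm
    rw [hrec, map_finsuppSum]
    refine Submodule.finsuppSum_mem _ _ _ _ fun i' hi' => ?_
    rw [LinearMap.rTensor_tmul]
    refine ⟨_ ⊗ₜ[k] (⟨coeffL β A (ρ (w b j)) i', ?_⟩ : C), rfl⟩
    rw [hK4b b i' j]
    exact hmemC b hb i' j
  have hCstab : ∀ b ∈ F, ∀ i j, Coalgebra.comul (R := k) (y b i j) ∈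
      LinearMap.range (TensorProduct.map C.subtype C.subtype) := fun b hb i j =>
    mem_range_map_of_mem_inf C C _ (hfirst b hb i j) (hsecond b hb i j)
  -- membership of coaction images
  have hρmem : ∀ x : B, (∀ j', coeffR α B (ρ x) j' ∈ V) → (∀ i, coeffL β A (ρ x) i ∈ C) →
      ρ x ∈ LinearMap.range (TensorProduct.map V.subtype C.subtype) := fun x h1 h2 =>
    mem_range_map_of_mem_inf V C (ρ x) (mem_range_of_coeffR_mem α h1)
      (mem_range_of_coeffL_mem β h2)
  have hρVS : ∀ x ∈ VS, ρ x ∈ LinearMap.range (TensorProduct.map V.subtype C.subtype) := by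
    intro x hx
    rcases hx with hx | hx
    · -- x ∈ F
      refine hρmem x (fun j' => ?_) (fun i => ?_)
      · refine Submodule.subset_span (Or.inr ?_)
        exact Set.mem_biUnion hx ⟨j', rfl⟩
      · exact hK4a x hx i
    · -- x ∈ ⋃ b ∈ F, range (w b)
      obtain ⟨b, hb, hx⟩ := Set.mem_iUnion₂.1 hx
      obtain ⟨j, rfl⟩ := hx
      refine hρmem (w b j) (fun j' => ?_) (fun i => ?_)
      · refine Submodule.span_le.2 ?_ (hK3 b j j')
        intro z hz
        obtain ⟨j'', rfl⟩ := hz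
        exact Submodule.subset_span (Or.inr (Set.mem_biUnion hb ⟨j'', rfl⟩))
      · rw [hK4b b i j]
        exact hmemC b hb i j
  -- the subalgebras
  set B' : Subalgebra k B := Algebra.adjoin k VS with hB'
  set ES : Set A := CS ∪ (HopfAlgebra.antipode (R := k) '' CS) with hES
  set A' : Subalgebra k A := Algebra.adjoin k ES with hA'
  have hESfin : ES.Finite := Set.Finite.union hCSfin (Set.Finite.image _ hCSfin)
  have hCsubA' : (C : Set A) ⊆ ↑A' := by
    intro c hc
    have hle : C ≤ Subalgebra.toSubmodule A' :=
      Submodule.span_le.2 fun z hz => Algebra.subset_adjoin (Or.inl hz)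
    exact hle hc
  have hSCsubA' : ∀ c ∈ C, HopfAlgebra.antipode (R := k) c ∈ A' := by
    intro c hc
    have : Submodule.map (HopfAlgebra.antipode (R := k)) C ≤ Subalgebra.toSubmodule A' := by
      rw [hC, Submodule.map_span]
      refine Submodule.span_le.2 ?_
      rintro z ⟨c', hc', rfl⟩
      exact Algebra.subset_adjoin (Or.inr ⟨c', hc', rfl⟩)
    exact this ⟨c, hc, rfl⟩
  have hVsubB' : (V : Set B) ⊆ ↑B' := by
    intro v hv
    have hle : V ≤ Subalgebra.toSubmodule B' :=
      Submodule.span_le.2 fun z hz => Algebra.subset_adjoin hz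
    exact hle hv
  -- comul stability of A'
  have hcomulA' : ∀ a ∈ A', Coalgebra.comul (R := k) a ∈
      (Algebra.TensorProduct.map A'.val A'.val).range := by
    have hgen : ∀ e ∈ ES, (Bialgebra.comulAlgHom k A) e ∈
        (Algebra.TensorProduct.map A'.val A'.val).range := by
      intro e he
      rw [show (Bialgebra.comulAlgHom k A) e = Coalgebra.comul (R := k) e from rfl]
      rcases he with he | ⟨c, hc, rfl⟩
      · -- e ∈ CS
        obtain ⟨b, hb, hbr⟩ := Set.mem_iUnion₂.1 he
        obtain ⟨i, hir⟩ := Set.mem_iUnion.1 hbr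
        obtain ⟨j, rfl⟩ := hir
        exact range_map_le_vals C C A' A' hCsubA' hCsubA' (hCstab b hb i j)
      · -- e = antipode c, c ∈ CS
        obtain ⟨b, hb, hbr⟩ := Set.mem_iUnion₂.1 hc
        obtain ⟨i, hir⟩ := Set.mem_iUnion.1 hbr
        obtain ⟨j, rfl⟩ := hir
        have hΔc := hCstab b hb i j
        obtain ⟨s, hs⟩ := hΔc
        rw [comul_antipode, ← hs]
        -- show comm (map S S (map ι ι s)) ∈ range
        clear hs
        induction s with
        | zero => simp only [map_zero]; exact zero_mem _
        | tmul u v =>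
          rw [TensorProduct.map_tmul, TensorProduct.map_tmul, TensorProduct.comm_tmul]
          exact ⟨(⟨_, hSCsubA' _ v.2⟩ : A') ⊗ₜ[k] (⟨_, hSCsubA' _ u.2⟩ : A'), rfl⟩
        | add u v hu hv =>
          rw [map_add, map_add, map_add]
          exact add_mem hu hv
    intro a ha
    have : A' ≤ ((Algebra.TensorProduct.map A'.val A'.val).range).comap
        (Bialgebra.comulAlgHom k A) := by
      rw [hA']
      exact Algebra.adjoin_le hgen
    exact this ha
  -- antipode stability of A'
  have hantipodeA' : ∀ a ∈ A', HopfAlgebra.antipode (R := k) a ∈ A' := by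
    have : A' ≤ A'.comap (antipodeAlgHom k A) := by
      rw [hA']
      refine Algebra.adjoin_le ?_
      rintro e (he | ⟨c, hc, rfl⟩)
      · exact Algebra.subset_adjoin (Or.inr ⟨e, he, rfl⟩)
      · show HopfAlgebra.antipode (R := k) (HopfAlgebra.antipode (R := k) c) ∈ A'
        rw [antipode_antipode]
        exact Algebra.subset_adjoin (Or.inl hc)
    exact fun a ha => this ha
  -- coaction stability
  have hρB' : ∀ x ∈ B', ρ x ∈ (Algebra.TensorProduct.map B'.val A'.val).range := by
    have : B' ≤ ((Algebra.TensorProduct.map B'.val A'.val).range).comap ρ := by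
      rw [hB']
      refine Algebra.adjoin_le fun x hx => ?_
      exact range_map_le_vals V C B' A' hVsubB' hCsubA' (hρVS x hx)
    exact fun x hx => this hx
  -- conclusion
  refine ⟨B', ⟨hVSfin.toFinset, by rw [Set.Finite.coe_toFinset]⟩, ?_, A',
    ⟨hESfin.toFinset, by rw [Set.Finite.coe_toFinset]⟩, ?_, hantipodeA', ?_⟩
  · exact fun b hb => Algebra.subset_adjoin (Or.inl hb)
  · intro a ha
    exact (mem_algRange_iff A'.val A'.val _).1 (hcomulA' a ha)
  · intro x hx
    exact (mem_algRange_iff B'.val A'.val _).1 (hρB' x hx)
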